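/- Let μ be a probability measure on ℝ^d supported in the closed Euclidean ball B(0,R) for some R > 0. Then for every s > 0, the density μ*γ_s can be written as μ*γ_s = e^{−H} γ_s, where H : ℝ^d → ℝ is (R/s)-Lipschitz. -/

import Mathlib

noncomputable section
open Real MeasureTheory

/-- Centered Gaussian density on `ℝ^d` with covariance `s • I_d`. -/
def gaussDensity {d : ℕ} (s : ℝ) (x : EuclideanSpace ℝ (Fin d)) : ℝ :=
  (2 * π * s) ^ (-(d : ℝ) / 2) * Real.exp (-‖x‖ ^ 2 / (2 * s))

/-- The heat flow `μ * γ_s` started from a measure `μ` on `ℝ^d`. -/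
def heatConvMeas {d : ℕ} (μ : Measure (EuclideanSpace ℝ (Fin d))) (s : ℝ)
    (z : EuclideanSpace ℝ (Fin d)) : ℝ :=
  ∫ x, gaussDensity s (z - x) ∂μ

/-- **Example 4 (first part).** If `μ` is a probability measure supported in the closed ball
`B(0,R)`, then for every `s > 0` one can write `μ * γ_s = e^{-H} γ_s` with `H` an
`(R/s)`-Lipschitz function. -/
theorem bounded_support_heat_flow_is_log_lipschitz_perturbation
    (d : ℕ) (R : ℝ) (hR : 0 < R)
    (μ : Measure (EuclideanSpace ℝ (Fin d))) [IsProbabilityMeasure μ]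
    (hsupp : μ (Metric.closedBall 0 R)ᶜ = 0)
    (s : ℝ) (hs : 0 < s) :
    ∃ H : EuclideanSpace ℝ (Fin d) → ℝ,
      LipschitzWith (R / s).toNNReal H ∧
      ∀ z, heatConvMeas μ s z = Real.exp (-(H z)) * gaussDensity s z := by
  have hae : ∀ᵐ x ∂μ, ‖x‖ ≤ R := by
    have h : ∀ᵐ x ∂μ, x ∈ Metric.closedBall (0 : EuclideanSpace ℝ (Fin d)) R := by
      rw [ae_iff]
      exact hsupp
    filter_upwards [h] with x hx
    simpa [Metric.mem_closedBall, dist_zero_right] using hx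
  set g : EuclideanSpace ℝ (Fin d) → EuclideanSpace ℝ (Fin d) → ℝ :=
    fun z x => (inner ℝ z x : ℝ) / s - ‖x‖ ^ 2 / (2 * s) with hgdef
  have hgcont : ∀ z, Continuous fun x => Real.exp (g z x) := by
    intro z
    apply Real.continuous_exp.comp
    exact ((continuous_const.inner continuous_id).div_const s).sub
      ((continuous_norm.pow 2).div_const (2 * s))
  have hInt : ∀ z, Integrable (fun x => Real.exp (g z x)) μ := by
    intro z
    refine Integrable.mono' (integrable_const (Real.exp (‖z‖ * R / s))) ((hgcont z).aestronglyMeasurable) ?_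
    filter_upwards [hae] with x hx
    rw [Real.norm_eq_abs, abs_of_pos (Real.exp_pos _)]
    apply Real.exp_le_exp.2
    have h1 : (inner ℝ z x : ℝ) ≤ ‖z‖ * ‖x‖ := real_inner_le_norm z x
    have h2 : ‖z‖ * ‖x‖ ≤ ‖z‖ * R := by nlinarith [norm_nonneg z]
    have h3 : (0:ℝ) ≤ ‖x‖ ^ 2 / (2 * s) := by positivity
    rw [hgdef]
    simp only
    calc (inner ℝ z x : ℝ) / s - ‖x‖ ^ 2 / (2 * s) ≤ (inner ℝ z x : ℝ) / s := by linarith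
      _ ≤ ‖z‖ * R / s := by gcongr; linarith
  set F : EuclideanSpace ℝ (Fin d) → ℝ := fun z => ∫ x, Real.exp (g z x) ∂μ with hFdef
  have hFpos : ∀ z, 0 < F z := by
    intro z
    have hc : (0:ℝ) < Real.exp (-(‖z‖ * R / s) - R ^ 2 / (2 * s)) := Real.exp_pos _
    have hle : Real.exp (-(‖z‖ * R / s) - R ^ 2 / (2 * s)) ≤ F z := by
      have : ∫ _x, Real.exp (-(‖z‖ * R / s) - R ^ 2 / (2 * s)) ∂μ =
          Real.exp (-(‖z‖ * R / s) - R ^ 2 / (2 * s)) := by simp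
      rw [← this]
      refine integral_mono_ae (integrable_const _) (hInt z) ?_
      filter_upwards [hae] with x hx
      apply Real.exp_le_exp.2
      have h1 : -(‖z‖ * ‖x‖) ≤ (inner ℝ z x : ℝ) :=
        (abs_le.mp (abs_real_inner_le_norm z x)).1
      have h2 : ‖z‖ * ‖x‖ ≤ ‖z‖ * R := by nlinarith [norm_nonneg z]
      have h3 : ‖x‖ ^ 2 ≤ R ^ 2 := by nlinarith [norm_nonneg x]
      have h4 : -(‖z‖ * R / s) ≤ (inner ℝ z x : ℝ) / s := by
        rw [← neg_div]
        gcongr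
        linarith
      have h5 : ‖x‖ ^ 2 / (2 * s) ≤ R ^ 2 / (2 * s) :=
        div_le_div_of_nonneg_right h3 (by positivity)
      rw [hgdef]; simp only; linarith
    linarith
  have hkey : ∀ z z', F z ≤ Real.exp (R / s * dist z z') * F z' := by
    intro z z'
    have : ∫ x, Real.exp (R / s * dist z z') * Real.exp (g z' x) ∂μ =
        Real.exp (R / s * dist z z') * F z' := integral_const_mul _ _
    rw [← this]
    refine integral_mono_ae (hInt z) ((hInt z').const_mul _) ?_
    filter_upwards [hae] with x hx
    rw [← Real.exp_add]
    apply Real.exp_le_exp.2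
    have h1 : (inner ℝ z x : ℝ) - (inner ℝ z' x : ℝ) = (inner ℝ (z - z') x : ℝ) := by
      rw [inner_sub_left]
    have h2 : (inner ℝ (z - z') x : ℝ) ≤ ‖z - z'‖ * ‖x‖ := real_inner_le_norm _ _
    have h3 : ‖z - z'‖ * ‖x‖ ≤ ‖z - z'‖ * R := by nlinarith [norm_nonneg (z - z')]
    have h4 : (inner ℝ z x : ℝ) / s - (inner ℝ z' x : ℝ) / s ≤ ‖z - z'‖ * R / s := by
      rw [div_sub_div_same, h1]
      gcongr
      linarith
    have h5 : R / s * dist z z' = ‖z - z'‖ * R / s := by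
      rw [dist_eq_norm]; ring
    rw [hgdef]; simp only; linarith [h5 ▸ h4]
  have hlog : ∀ z z', Real.log (F z) - Real.log (F z') ≤ R / s * dist z z' := by
    intro z z'
    have := Real.log_le_log (hFpos z) (hkey z z')
    rwa [Real.log_mul (Real.exp_pos _).ne' (hFpos z').ne', Real.log_exp,
      ← sub_le_iff_le_add] at this
  refine ⟨fun z => -Real.log (F z), ?_, ?_⟩
  · apply LipschitzWith.of_dist_le_mul
    intro z z'
    rw [Real.coe_toNNReal _ (by positivity : (0:ℝ) ≤ R / s), Real.dist_eq]
    rw [abs_sub_le_iff]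
    constructor
    · have := hlog z' z
      rw [dist_comm] at this
      linarith
    · linarith [hlog z z']
  · intro z
    have hpt : ∀ x, gaussDensity s (z - x) = gaussDensity s z * Real.exp (g z x) := by
      intro x
      have hnorm : ‖z - x‖ ^ 2 = ‖z‖ ^ 2 - 2 * (inner ℝ z x : ℝ) + ‖x‖ ^ 2 :=
        norm_sub_sq_real z x
      have hexp : Real.exp (-‖z‖ ^ 2 / (2 * s)) *
          Real.exp ((inner ℝ z x : ℝ) / s - ‖x‖ ^ 2 / (2 * s)) =
          Real.exp (-‖z - x‖ ^ 2 / (2 * s)) := by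
        rw [← Real.exp_add]
        congr 1
        rw [hnorm]
        field_simp
        ring
      simp only [gaussDensity, hgdef, mul_assoc, hexp]
    rw [heatConvMeas]
    simp_rw [hpt]
    rw [integral_const_mul, neg_neg, Real.exp_log (hFpos z)]
    ring
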